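/- In the setting of Theorem 3, the quantity h₁(D₀,D,δ) = (n₀/n)∫ log L(θ|D)[π(θ|D₀,D,δ) − π(θ|D₀,δ)]dθ equals (n₀/n)[K(π(·|D₀,D,δ), π(·|D₀,δ)) + K(π(·|D₀,δ), π(·|D₀,D,δ))], hence h₁ ≥ 0 with equality if and only if π(θ|D₀,D,δ) = π(θ|D₀,δ) almost everywhere. -/

import Mathlib

open MeasureTheory Real Set

lemma sign_lemma {a b : ℝ} (ha : 0 < a) (hb : 0 < b) :
    0 ≤ (a - b) * Real.log (a / b) ∧ ((a - b) * Real.log (a / b) = 0 ↔ a = b) := by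
  rcases lt_trichotomy a b with h | h | h
  · have h1 : a - b < 0 := by linarith
    have h2 : Real.log (a / b) < 0 :=
      Real.log_neg (div_pos ha hb) ((div_lt_one hb).2 h)
    have := mul_pos_of_neg_of_neg h1 h2
    constructor
    · linarith
    · constructor
      · intro hz; nlinarith
      · intro hz; linarith
  · simp [h]
  · have h1 : 0 < a - b := by linarith
    have h2 : 0 < Real.log (a / b) :=
      Real.log_pos ((one_lt_div hb).2 h)
    have := mul_pos h1 h2
    constructor
    · linarith
    · constructor
      · intro hz; nlinarith
      · intro hz; linarith

/-- h₁(D₀,D,δ) equals (n₀/n) times the symmetrized KL divergence between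
the δ-posterior with and without the current data, hence is nonnegative, vanishing iff
the two densities agree a.e. -/
theorem h1_eq_symmetrized_kl {Θ : Type*} [MeasurableSpace Θ] (μ : Measure Θ)
    [SigmaFinite μ] (n n₀ : ℝ) (hn : 0 < n) (hn₀ : 0 < n₀)
    (LD p q : Θ → ℝ) (hLD : ∀ θ, 0 < LD θ)
    (hp : ∀ θ, 0 < p θ) (hq : ∀ θ, 0 < q θ)
    (hp1 : ∫ θ, p θ ∂μ = 1) (hq1 : ∫ θ, q θ ∂μ = 1)
    (M : ℝ) (hM : M = ∫ θ, LD θ * q θ ∂μ) (hMpos : 0 < M)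
    (hratio : ∀ θ, p θ = LD θ * q θ / M)
    (h₁ : ℝ) (hh₁ : h₁ = (n₀ / n) * ∫ θ, Real.log (LD θ) * (p θ - q θ) ∂μ)
    (Kpq Kqp : ℝ)
    (hKpq : Kpq = ∫ θ, p θ * Real.log (p θ / q θ) ∂μ)
    (hKqp : Kqp = ∫ θ, q θ * Real.log (q θ / p θ) ∂μ)
    (hintp : Integrable (fun θ => p θ * Real.log (p θ / q θ)) μ)
    (hintq : Integrable (fun θ => q θ * Real.log (q θ / p θ)) μ)
    (hint : Integrable (fun θ => Real.log (LD θ) * (p θ - q θ)) μ) :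
    h₁ = (n₀ / n) * (Kpq + Kqp) ∧ 0 ≤ h₁ ∧ (h₁ = 0 ↔ p =ᵐ[μ] q) := by
  set f : Θ → ℝ := fun θ => (p θ - q θ) * Real.log (p θ / q θ) with hf
  -- pointwise identity : p log(p/q) + q log(q/p) = f
  have hsum : ∀ θ, p θ * Real.log (p θ / q θ) + q θ * Real.log (q θ / p θ) = f θ := by
    intro θ
    have h1 : Real.log (q θ / p θ) = - Real.log (p θ / q θ) := by
      rw [Real.log_div (ne_of_gt (hq θ)) (ne_of_gt (hp θ)),
        Real.log_div (ne_of_gt (hp θ)) (ne_of_gt (hq θ))]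
      ring
    simp only [hf, h1]; ring
  have hfint : Integrable f μ := by
    have := hintp.add hintq
    exact this.congr (Filter.Eventually.of_forall fun θ => hsum θ)
  -- log (p/q) = log LD - log M
  have hlogpq : ∀ θ, Real.log (p θ / q θ) = Real.log (LD θ) - Real.log M := by
    intro θ
    have : p θ / q θ = LD θ / M := by
      have hqne : q θ ≠ 0 := (hq θ).ne'
      have hMne : M ≠ 0 := hMpos.ne'
      rw [hratio θ]
      field_simp
    rw [this, Real.log_div (ne_of_gt (hLD θ)) (ne_of_gt hMpos)]
  -- key identity for f
  have hfid : ∀ θ, f θ = Real.log (LD θ) * (p θ - q θ) - Real.log M * (p θ - q θ) := by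
    intro θ; simp only [hf, hlogpq θ]; ring
  have hip : Integrable p μ := by
    by_contra h
    rw [integral_undef h] at hp1; norm_num at hp1
  have hiq : Integrable q μ := by
    by_contra h
    rw [integral_undef h] at hq1; norm_num at hq1
  have hintpq : Integrable (fun θ => Real.log M * (p θ - q θ)) μ :=
    ((hip.sub hiq).const_mul _)
  have hzero : ∫ θ, Real.log M * (p θ - q θ) ∂μ = 0 := by
    rw [integral_const_mul, integral_sub hip hiq, hp1, hq1]; ring
  have hfeq : ∫ θ, f θ ∂μ = ∫ θ, Real.log (LD θ) * (p θ - q θ) ∂μ := by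
    calc ∫ θ, f θ ∂μ
        = ∫ θ, (Real.log (LD θ) * (p θ - q θ) - Real.log M * (p θ - q θ)) ∂μ := by
          exact integral_congr_ae (Filter.Eventually.of_forall fun θ => hfid θ)
      _ = (∫ θ, Real.log (LD θ) * (p θ - q θ) ∂μ) - ∫ θ, Real.log M * (p θ - q θ) ∂μ :=
          integral_sub hint hintpq
      _ = ∫ θ, Real.log (LD θ) * (p θ - q θ) ∂μ := by rw [hzero]; ring
  have hKsum : Kpq + Kqp = ∫ θ, f θ ∂μ := by
    rw [hKpq, hKqp, ← integral_add hintp hintq]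
    exact integral_congr_ae (Filter.Eventually.of_forall fun θ => hsum θ)
  have hfnonneg : ∀ θ, 0 ≤ f θ := fun θ => (sign_lemma (hp θ) (hq θ)).1
  have hInteg : 0 ≤ ∫ θ, f θ ∂μ := integral_nonneg hfnonneg
  have heq1 : h₁ = (n₀ / n) * (Kpq + Kqp) := by
    rw [hh₁, hKsum, hfeq]
  have hcpos : 0 < n₀ / n := div_pos hn₀ hn
  refine ⟨heq1, ?_, ?_⟩
  · rw [heq1, hKsum]; positivity
  · rw [heq1, hKsum]
    constructor
    · intro h
      have hI0 : ∫ θ, f θ ∂μ = 0 := by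
        rcases mul_eq_zero.1 h with h' | h'
        · exact absurd h' (ne_of_gt hcpos)
        · exact h'
      have := (integral_eq_zero_iff_of_nonneg hfnonneg hfint).1 hI0
      filter_upwards [this] with θ hθ
      exact ((sign_lemma (hp θ) (hq θ)).2).1 hθ
    · intro h
      have : ∫ θ, f θ ∂μ = 0 := by
        rw [(integral_eq_zero_iff_of_nonneg hfnonneg hfint)]
        filter_upwards [h] with θ hθ
        exact ((sign_lemma (hp θ) (hq θ)).2).2 hθ
      rw [this, mul_zero]
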